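/- arXiv:2106.12323 — 2 statements merged into one kernel-verified Lean document; each statement's English description precedes it below -/
import Mathlib

section
/- Let T be a countably branching well-founded tree with associated tree of initial segments T̃. Let (μ_i) be a bounded and disjointly supported sequence in M_+(T̃) such that ν = succ-lim_i μ_i exists. Then there exist an infinite subset L of ℕ and, for each i ∈ L, a partition supp(μ_i) = A_i ∪ B_i (A_i, B_i disjoint) such that: (i) the measures μ_i^1 given by μ_i^1(C) = μ_i(C ∩ A_i) satisfy ν = w*-lim_{i∈L} μ_i^1 and ν = succ-lim_{i∈L} μ_i^1; and (ii) the measures μ_i^2 given by μ_i^2(C) = μ_i(C ∩ B_i) satisfy: for every t̃ ∈ T̃ the sequence (μ_i^2(S(t̃)))_{i∈L} is eventually zero; in particular succ-lim_{i∈L} μ_i^2 = 0. -/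
/-- A countably branching well-founded tree `T = (M, ≼)` on an infinite subset `M` of `ℕ`:
`≼` is a partial order on `M` compatible with the usual order, predecessor sets are finite
chains, there is no infinite totally ordered subset, and every non-maximal node has
(countably) infinitely many immediate successors. -/
structure NatTree where
  M : Set ℕ
  infinite : M.Infinite
  r : ℕ → ℕ → Prop
  mem_left : ∀ {a b : ℕ}, r a b → a ∈ M
  mem_right : ∀ {a b : ℕ}, r a b → b ∈ M
  refl : ∀ a ∈ M, r a a
  antisymm : ∀ {a b : ℕ}, r a b → r b a → a = b
  trans : ∀ {a b c : ℕ}, r a b → r b c → r a c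
  compat : ∀ {a b : ℕ}, r a b → a ≤ b
  pred_finite : ∀ a ∈ M, {b : ℕ | r b a}.Finite
  pred_chain : ∀ a ∈ M, ∀ {b c : ℕ}, r b a → r c a → r b c ∨ r c b
  wellFounded : ∀ C : Set ℕ, C ⊆ M → (∀ a ∈ C, ∀ b ∈ C, r a b ∨ r b a) → C.Finite
  branching : ∀ a ∈ M, (∃ b, b ≠ a ∧ r a b) →
    {b : ℕ | r a b ∧ b ≠ a ∧ ∀ c, r a c → r c b → c = a ∨ c = b}.Infinite

/-- A bounded positive (countably additive) measure defined on all subsets of `α`. -/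
structure PosMeasure (α : Type*) where
  m : Set α → ℝ
  nonneg : ∀ A, 0 ≤ m A
  empty : m ∅ = 0
  cadd : ∀ A : ℕ → Set α, (Pairwise fun i j => Disjoint (A i) (A j)) →
    HasSum (fun i => m (A i)) (m (⋃ i, A i))

/-- The support of a positive measure: the set of atoms of positive mass. -/
def suppM (μ : PosMeasure ℕ) : Set ℕ := {t | 0 < μ.m {t}}

/-- `V_t = {s : t ≼ s}`, the nodes above `t`. -/
def V (T : NatTree) (t : ℕ) : Set ℕ := {s | T.r t s}

/-- `S(t)`: the set of immediate successors of a node `t`. -/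
def Succ (T : NatTree) (t : ℕ) : Set ℕ :=
  {s | T.r t s ∧ s ≠ t ∧ ∀ c, T.r t c → T.r c s → c = t ∨ c = s}

section Helpers

open Filter

namespace PosMeasure

variable (μ : PosMeasure ℕ)

lemma add {A B : Set ℕ} (h : Disjoint A B) : μ.m (A ∪ B) = μ.m A + μ.m B := by
  classical
  set f : ℕ → Set ℕ := fun k => if k = 0 then A else if k = 1 then B else ∅ with hf
  have hd : Pairwise fun i j => Disjoint (f i) (f j) := by
    intro i j hij
    simp only [hf]
    split_ifs <;> simp_all <;> first
      | exact h | exact h.symm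
  have hs := μ.cadd f hd
  have hUnion : (⋃ i, f i) = A ∪ B := by
    ext x
    simp only [Set.mem_iUnion, hf, Set.mem_union]
    constructor
    · rintro ⟨i, hi⟩
      split_ifs at hi <;> simp_all
    · rintro (hx | hx)
      · exact ⟨0, by simp [hx]⟩
      · exact ⟨1, by simp [hx]⟩
  rw [hUnion] at hs
  have h2 : HasSum (fun k => μ.m (f k)) (∑ k ∈ ({0, 1} : Finset ℕ), μ.m (f k)) := by
    apply hasSum_sum_of_ne_finset_zero
    intro b hb
    simp only [Finset.mem_insert, Finset.mem_singleton, not_or] at hb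
    simp [hf, hb.1, hb.2, μ.empty]
  rw [Finset.sum_pair (by norm_num)] at h2
  simpa [hf] using (hs.unique h2)

lemma mono {A B : Set ℕ} (h : A ⊆ B) : μ.m A ≤ μ.m B := by
  have : μ.m (A ∪ (B \ A)) = μ.m A + μ.m (B \ A) :=
    μ.add Set.disjoint_sdiff_right
  rw [Set.union_diff_cancel h] at this
  have := μ.nonneg (B \ A)
  linarith

lemma finsetSum (f : ℕ → Set ℕ) (hd : Pairwise fun i j => Disjoint (f i) (f j))
    (s : Finset ℕ) : μ.m (⋃ k ∈ s, f k) = ∑ k ∈ s, μ.m (f k) := by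
  classical
  induction s using Finset.induction_on with
  | empty => simp [μ.empty]
  | insert a s ha ih =>
    rw [Finset.set_biUnion_insert, μ.add, ih, Finset.sum_insert ha]
    rw [Set.disjoint_iUnion_right]
    intro i
    rw [Set.disjoint_iUnion_right]
    intro hi
    exact hd (fun hai => ha (hai ▸ hi))

lemma diff_supp (C : Set ℕ) : μ.m (C \ suppM μ) = 0 := by
  set f : ℕ → Set ℕ := fun k => (C \ suppM μ) ∩ {k} with hf
  have hd : Pairwise fun i j => Disjoint (f i) (f j) := by
    intro i j hij
    simp only [hf]
    exact (Set.disjoint_singleton.2 hij).mono Set.inter_subset_right Set.inter_subset_right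
  have hs := μ.cadd f hd
  have hU : (⋃ k, f k) = C \ suppM μ := by
    ext x
    simp [hf]
  have hz : (fun k => μ.m (f k)) = fun _ => (0 : ℝ) := by
    funext k
    by_cases hk : k ∈ C \ suppM μ
    · have : f k = {k} := by
        ext x; simp only [hf, Set.mem_inter_iff, Set.mem_singleton_iff]
        constructor
        · exact fun h => h.2
        · rintro rfl; exact ⟨hk, rfl⟩
      rw [this]
      have h1 : ¬ (0 < μ.m {k}) := hk.2
      have h2 := μ.nonneg {k}
      linarith [lt_of_le_of_ne h2]
    · have : f k = ∅ := by
        ext x; simp only [hf, Set.mem_inter_iff, Set.mem_singleton_iff, Set.mem_empty_iff_false,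
          iff_false, not_and]
        rintro hx rfl; exact hk hx
      rw [this, μ.empty]
  rw [hU] at hs
  rw [hz] at hs
  exact (hasSum_zero.unique hs).symm

lemma inter_supp (C : Set ℕ) : μ.m (C ∩ suppM μ) = μ.m C := by
  have h1 : μ.m ((C ∩ suppM μ) ∪ (C \ suppM μ)) = μ.m (C ∩ suppM μ) + μ.m (C \ suppM μ) :=
    μ.add (Set.disjoint_sdiff_right.mono_left Set.inter_subset_right)
  rw [Set.inter_union_diff] at h1
  rw [μ.diff_supp] at h1
  linarith

lemma hasSum_singletons (C : Set ℕ) :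
    HasSum (fun k => μ.m (C ∩ {k})) (μ.m C) := by
  have hd : Pairwise fun i j => Disjoint (C ∩ {i} : Set ℕ) (C ∩ {j}) := by
    intro i j hij
    exact (Set.disjoint_singleton.2 hij).mono Set.inter_subset_right Set.inter_subset_right
  have hs := μ.cadd (fun k => C ∩ {k}) hd
  have hU : (⋃ k, C ∩ {k}) = C := by ext x; simp
  rwa [hU] at hs

end PosMeasure

section TreeLemmas

variable (T : NatTree)

lemma succ_disjoint : Pairwise fun i j => Disjoint (Succ T i) (Succ T j) := by
  intro i j hij
  rw [Set.disjoint_left]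
  rintro s ⟨hris, hsi, hi⟩ ⟨hrjs, hsj, hj⟩
  have hsM : s ∈ T.M := T.mem_right hris
  rcases T.pred_chain s hsM hris hrjs with hij' | hji'
  · rcases hi j hij' hrjs with h | h
    · exact hij h.symm
    · exact hsj h.symm
  · rcases hj i hji' hris with h | h
    · exact hij h
    · exact hsi h.symm

lemma succ_subset_V {t k : ℕ} (h : T.r t k) : Succ T k ⊆ V T t := by
  rintro s ⟨hks, _, _⟩
  exact T.trans h hks

lemma V_inter_succ_subset {t k : ℕ} (ht : t ∈ T.M) (h : ¬ T.r t k) :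
    V T t ∩ Succ T k ⊆ {t} := by
  rintro s ⟨hts, hks, hsk, hk⟩
  have hsM : s ∈ T.M := T.mem_right hts
  rcases T.pred_chain s hsM hts hks with h1 | h1
  · exact absurd h1 h
  · rcases hk t h1 hts with h2 | h2
    · exact absurd (h2 ▸ T.refl t ht) h
    · exact h2.symm

end TreeLemmas

end Helpers

/-- splitting lemma: if `(μ_i)` is bounded and disjointly supported and
`ν = succ-lim_i μ_i` exists, then along an infinite subset (enumerated by `φ`) the supports
split as `supp μ_i = A_i ∪ B_i` so that the restrictions `μ_i^1 = μ_i(· ∩ A_i)` satisfy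
`ν = w*-lim μ_i^1 = succ-lim μ_i^1`, while the restrictions `μ_i^2 = μ_i(· ∩ B_i)` satisfy
`(μ_i^2(S(t)))_i` eventually zero for every `t`; in particular `succ-lim μ_i^2 = 0`. -/
theorem stmt_12 (T : NatTree) (μ : ℕ → PosMeasure ℕ) (ν : PosMeasure ℕ)
    (hsupp : ∀ i, suppM (μ i) ⊆ T.M)
    (hdisj : ∀ i j : ℕ, i ≠ j → Disjoint (suppM (μ i)) (suppM (μ j)))
    (hbdd : ∃ B : ℝ, ∀ i, (μ i).m Set.univ ≤ B)
    (hν : ∀ t ∈ T.M, Filter.Tendsto (fun i => (μ i).m (Succ T t))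
      Filter.atTop (nhds (ν.m {t}))) :
    ∃ φ : ℕ → ℕ, StrictMono φ ∧ ∃ A B : ℕ → Set ℕ,
      (∀ n : ℕ, A n ∪ B n = suppM (μ (φ n)) ∧ Disjoint (A n) (B n)) ∧
      (∀ t ∈ T.M,
        Filter.Tendsto (fun n => (μ (φ n)).m (V T t ∩ A n)) Filter.atTop
          (nhds (ν.m (V T t))) ∧
        Filter.Tendsto (fun n => (μ (φ n)).m (Succ T t ∩ A n)) Filter.atTop
          (nhds (ν.m {t}))) ∧
      (∀ t ∈ T.M,
        (∀ᶠ n in Filter.atTop, (μ (φ n)).m (Succ T t ∩ B n) = 0) ∧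
        Filter.Tendsto (fun n => (μ (φ n)).m (Succ T t ∩ B n)) Filter.atTop (nhds 0)) := by
  classical
  set c : ℕ → ℝ := fun n => (1/2)^n / (n+1) with hc
  have hcpos : ∀ n, 0 < c n := by
    intro n
    rw [hc]
    positivity
  have hev : ∀ n, ∀ᶠ i in Filter.atTop, ∀ k ∈ Finset.range (n+1), k ∈ T.M →
      (μ i).m (Succ T k) ≤ ν.m {k} + c n := by
    intro n
    rw [Filter.eventually_all_finset]
    intro k _
    by_cases hkM : k ∈ T.M
    · exact ((hν k hkM).eventually
        (gt_mem_nhds (lt_add_of_pos_right _ (hcpos n)))).mono (fun i hi _ => hi.le)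
    · exact Filter.Eventually.of_forall (fun i h' => absurd h' hkM)
  obtain ⟨φ, hφ, hP⟩ := Filter.extraction_forall_of_eventually hev
  have hφtop : Filter.Tendsto φ Filter.atTop Filter.atTop := hφ.tendsto_atTop
  set U : ℕ → Set ℕ := fun n => ⋃ k ∈ Finset.range (n+1), Succ T k with hUdef
  refine ⟨φ, hφ, fun n => suppM (μ (φ n)) ∩ U n, fun n => suppM (μ (φ n)) \ U n,
    fun n => ⟨Set.inter_union_diff _ _,
      Set.disjoint_sdiff_right.mono_left Set.inter_subset_right⟩, ?_, ?_⟩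
  · -- part (i)
    intro t ht
    constructor
    · -- w*-limit part
      have hSum : HasSum (fun k => ν.m (V T t ∩ {k})) (ν.m (V T t)) := ν.hasSum_singletons _
      -- eventual vanishing of the mass at t
      have ht0 : ∀ᶠ n in Filter.atTop, (μ (φ n)).m {t} = 0 := by
        have hfin : {n | (μ (φ n)).m {t} ≠ 0}.Subsingleton := by
          intro a ha b hb
          by_contra hab
          have haS : t ∈ suppM (μ (φ a)) :=
            lt_of_le_of_ne ((μ (φ a)).nonneg {t}) (Ne.symm ha)
          have hbS : t ∈ suppM (μ (φ b)) :=
            lt_of_le_of_ne ((μ (φ b)).nonneg {t}) (Ne.symm hb)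
          exact (hdisj (φ a) (φ b) (fun h => hab (hφ.injective h))).le_bot ⟨haS, hbS⟩
        rw [← Nat.cofinite_eq_atTop]
        exact (Set.Finite.eventually_cofinite_notMem hfin.finite).mono fun n hn => not_not.mp hn
      -- the key identity
      have hkey : ∀ n, (μ (φ n)).m (V T t ∩ (suppM (μ (φ n)) ∩ U n)) =
          ∑ k ∈ Finset.range (n+1), (μ (φ n)).m (V T t ∩ Succ T k) := by
        intro n
        have hdj : Pairwise fun i j =>
            Disjoint ((V T t ∩ Succ T i) ∩ suppM (μ (φ n)))
              ((V T t ∩ Succ T j) ∩ suppM (μ (φ n))) := fun i j hij =>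
          (succ_disjoint T hij).mono (Set.inter_subset_left.trans Set.inter_subset_right)
            (Set.inter_subset_left.trans Set.inter_subset_right)
        have hUeq : V T t ∩ (suppM (μ (φ n)) ∩ U n)
            = ⋃ k ∈ Finset.range (n+1), ((V T t ∩ Succ T k) ∩ suppM (μ (φ n))) := by
          ext x
          simp only [hUdef, Set.mem_inter_iff, Set.mem_iUnion, exists_prop]
          tauto
        rw [hUeq, (μ (φ n)).finsetSum _ hdj]
        exact Finset.sum_congr rfl fun k _ => (μ (φ n)).inter_supp _
      -- uniform upper bound
      have hupper : ∀ n, ∑ k ∈ Finset.range (n+1), (μ (φ n)).m (V T t ∩ Succ T k)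
          ≤ (μ (φ n)).m {t} + ν.m (V T t) + (1/2)^n := by
        intro n
        rw [← Finset.sum_filter_add_sum_filter_not (Finset.range (n+1)) (· ∈ V T t)]
        have hin : ∑ k ∈ (Finset.range (n+1)).filter (· ∈ V T t),
            (μ (φ n)).m (V T t ∩ Succ T k) ≤ ν.m (V T t) + (1/2)^n := by
          have h1 : ∀ k ∈ (Finset.range (n+1)).filter (· ∈ V T t),
              (μ (φ n)).m (V T t ∩ Succ T k) ≤ ν.m (V T t ∩ {k}) + c n := by
            intro k hk
            rw [Finset.mem_filter, Finset.mem_range] at hk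
            have hkV : k ∈ V T t := hk.2
            have hkM : k ∈ T.M := T.mem_right hkV
            have e1 : V T t ∩ Succ T k = Succ T k :=
              Set.inter_eq_self_of_subset_right (succ_subset_V T hkV)
            have e2 : V T t ∩ {k} = {k} :=
              Set.inter_eq_self_of_subset_right (Set.singleton_subset_iff.2 hkV)
            rw [e1, e2]
            exact hP n k (Finset.mem_range.2 hk.1) hkM
          calc ∑ k ∈ (Finset.range (n+1)).filter (· ∈ V T t),
                (μ (φ n)).m (V T t ∩ Succ T k)
              ≤ ∑ k ∈ (Finset.range (n+1)).filter (· ∈ V T t), (ν.m (V T t ∩ {k}) + c n) :=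
                Finset.sum_le_sum h1
            _ = ∑ k ∈ (Finset.range (n+1)).filter (· ∈ V T t), ν.m (V T t ∩ {k})
                + ((Finset.range (n+1)).filter (· ∈ V T t)).card * c n := by
                rw [Finset.sum_add_distrib, Finset.sum_const, nsmul_eq_mul]
            _ ≤ ν.m (V T t) + (1/2)^n := by
                have hs1 : ∑ k ∈ (Finset.range (n+1)).filter (· ∈ V T t),
                    ν.m (V T t ∩ {k}) ≤ ν.m (V T t) :=
                  sum_le_hasSum _ (fun k _ => ν.nonneg _) hSum
                have hcard : (((Finset.range (n+1)).filter (· ∈ V T t)).card : ℝ) ≤ n + 1 := by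
                  have := Finset.card_filter_le (Finset.range (n+1)) (· ∈ V T t)
                  rw [Finset.card_range] at this
                  exact_mod_cast this
                have hmul : (((Finset.range (n+1)).filter (· ∈ V T t)).card : ℝ) * c n
                    ≤ ((n:ℝ) + 1) * c n := mul_le_mul_of_nonneg_right hcard (hcpos n).le
                have heq : ((n:ℝ) + 1) * c n = (1/2)^n := by
                  rw [hc]
                  have : ((n:ℝ) + 1) ≠ 0 := by positivity
                  field_simp
                linarith
        have hout : ∑ k ∈ (Finset.range (n+1)).filter (fun k => ¬ k ∈ V T t),
            (μ (φ n)).m (V T t ∩ Succ T k) ≤ (μ (φ n)).m {t} := by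
          have hdj : Pairwise fun i j => Disjoint (V T t ∩ Succ T i) (V T t ∩ Succ T j) :=
            fun i j hij =>
              (succ_disjoint T hij).mono Set.inter_subset_right Set.inter_subset_right
          rw [← (μ (φ n)).finsetSum _ hdj]
          apply (μ (φ n)).mono
          simp only [Set.iUnion_subset_iff]
          intro k hk
          rw [Finset.mem_filter] at hk
          exact V_inter_succ_subset T ht hk.2
        linarith
      rw [Metric.tendsto_atTop]
      intro ε hε
      obtain ⟨K, hK⟩ := Metric.tendsto_atTop.mp hSum.tendsto_sum_nat (ε/4) (by linarith)
      have hKlow : ν.m (V T t) - ε/4 < ∑ k ∈ Finset.range K, ν.m (V T t ∩ {k}) := by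
        have h4 := hK K le_rfl
        rw [Real.dist_eq, abs_sub_lt_iff] at h4
        linarith [h4.2]
      set δ := ε/(4*(K+1)) with hδ
      have hδpos : 0 < δ := by rw [hδ]; positivity
      have hev2 : ∀ᶠ i in Filter.atTop, ∀ k ∈ Finset.range K, k ∈ T.M →
          ν.m {k} - δ ≤ (μ i).m (Succ T k) := by
        rw [Filter.eventually_all_finset]
        intro k _
        by_cases hkM : k ∈ T.M
        · exact ((hν k hkM).eventually
            (lt_mem_nhds (by linarith : ν.m {k} - δ < ν.m {k}))).mono (fun i hi _ => hi.le)
        · exact Filter.Eventually.of_forall fun i h => absurd h hkM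
      have hev2' := hφtop.eventually hev2
      have hev3 : ∀ᶠ n : ℕ in Filter.atTop, ((1:ℝ)/2)^n ≤ ε/4 := by
        have h5 := tendsto_pow_atTop_nhds_zero_of_lt_one
          (by norm_num : (0:ℝ) ≤ 1/2) (by norm_num : (1:ℝ)/2 < 1)
        exact (h5.eventually (gt_mem_nhds (by linarith : (0:ℝ) < ε/4))).mono fun n hn => hn.le
      obtain ⟨N, hN⟩ := Filter.eventually_atTop.mp (ht0.and (hev2'.and hev3))
      refine ⟨max N K, fun n hn => ?_⟩
      obtain ⟨h0, h2, h3⟩ := hN n (le_trans (le_max_left N K) hn)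
      have hnK : K ≤ n := le_trans (le_max_right N K) hn
      have hup : (μ (φ n)).m (V T t ∩ (suppM (μ (φ n)) ∩ U n)) ≤ ν.m (V T t) + ε/4 := by
        rw [hkey n]
        have h6 := hupper n
        rw [h0] at h6
        linarith
      have hlowkey : ∑ k ∈ Finset.range K, (ν.m (V T t ∩ {k}) - δ)
          ≤ ∑ k ∈ Finset.range (n+1), (μ (φ n)).m (V T t ∩ Succ T k) := by
        have hsub : Finset.range K ⊆ Finset.range (n+1) := Finset.range_subset_range.2 (by omega)
        refine le_trans (Finset.sum_le_sum ?_) (Finset.sum_le_sum_of_subset_of_nonneg hsub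
          (fun k _ _ => (μ (φ n)).nonneg _))
        intro k hk
        by_cases hkV : k ∈ V T t
        · have hkM : k ∈ T.M := T.mem_right hkV
          have e1 : V T t ∩ Succ T k = Succ T k :=
            Set.inter_eq_self_of_subset_right (succ_subset_V T hkV)
          have e2 : V T t ∩ {k} = {k} :=
            Set.inter_eq_self_of_subset_right (Set.singleton_subset_iff.2 hkV)
          rw [e1, e2]
          exact h2 k hk hkM
        · have e2 : V T t ∩ {k} = ∅ := by
            ext x
            simp only [Set.mem_inter_iff, Set.mem_singleton_iff, Set.mem_empty_iff_false,
              iff_false, not_and]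
            rintro hx rfl
            exact hkV hx
          rw [e2, ν.empty]
          have := (μ (φ n)).nonneg (V T t ∩ Succ T k)
          linarith
      have hlow : ν.m (V T t) - ε/2 - ε/4 ≤ (μ (φ n)).m (V T t ∩ (suppM (μ (φ n)) ∩ U n)) := by
        rw [hkey n]
        have hsum : ∑ k ∈ Finset.range K, (ν.m (V T t ∩ {k}) - δ)
            = ∑ k ∈ Finset.range K, ν.m (V T t ∩ {k}) - K * δ := by
          rw [Finset.sum_sub_distrib, Finset.sum_const, nsmul_eq_mul, Finset.card_range]
        have hKδ : (K:ℝ) * δ ≤ ε/4 := by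
          have hK1 : ((K:ℝ) + 1) * δ = ε/4 := by
            rw [hδ]
            have : ((K:ℝ) + 1) ≠ 0 := by positivity
            field_simp
          nlinarith [hδpos]
        linarith [hlowkey]
      rw [Real.dist_eq, abs_sub_lt_iff]
      constructor <;> linarith
    · -- succ-limit part
      have hseq : ∀ᶠ n in Filter.atTop,
          (μ (φ n)).m (Succ T t) = (μ (φ n)).m (Succ T t ∩ (suppM (μ (φ n)) ∩ U n)) := by
        filter_upwards [Filter.eventually_ge_atTop t] with n hn
        have h1 : Succ T t ∩ (suppM (μ (φ n)) ∩ U n) = Succ T t ∩ suppM (μ (φ n)) := by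
          ext x
          simp only [hUdef, Set.mem_inter_iff, Set.mem_iUnion, exists_prop]
          constructor
          · rintro ⟨hx, hs, _⟩
            exact ⟨hx, hs⟩
          · rintro ⟨hx, hs⟩
            exact ⟨hx, hs, t, Finset.mem_range.2 (by omega), hx⟩
        rw [h1, (μ (φ n)).inter_supp]
      exact Filter.Tendsto.congr' hseq ((hν t ht).comp hφtop)
  · -- part (ii)
    intro t ht
    have hev0 : ∀ᶠ n in Filter.atTop,
        (μ (φ n)).m (Succ T t ∩ (suppM (μ (φ n)) \ U n)) = 0 := by
      filter_upwards [Filter.eventually_ge_atTop t] with n hn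
      have h1 : Succ T t ∩ (suppM (μ (φ n)) \ U n) = ∅ := by
        ext x
        simp only [Set.mem_inter_iff, Set.mem_diff, Set.mem_empty_iff_false, iff_false, not_and]
        intro hx hxd
        simp only [hUdef, Set.mem_iUnion, exists_prop]
        exact fun h => h ⟨t, Finset.mem_range.2 (by omega), hx⟩
      rw [h1, (μ (φ n)).empty]
    exact ⟨hev0, Filter.Tendsto.congr' (hev0.mono fun n h => h.symm) tendsto_const_nhds⟩
end

section
/- Let (m_j), (n_j) be the ℓ_1-parameters (m_1 = 2, n_1 = 1, m_{j+1} = m_j^{m_j}, n_{j+1} = 2^{2m_{j+1}} n_j) and let W_aux^{(1)} be the ℓ_1-auxiliary norming set. Let j ≥ 2, 0 < ε ≤ 1/m_j, and let x = Σ_{k∈F} c_k e_k be an (n_j, ε)-basic special convex combination. Then every f ∈ W_aux^{(1)} satisfies: (a) if f = ±e_i^* for some i, then |f(x)| ≤ ε; (b) if f = (1/m_i)·Σ_{l=1}^d f_l, for an S_{n_i+1}-admissible sequence (f_l) in W_aux^{(1)}, with m_i ≥ m_j, then |f(x)| ≤ 1/m_i; (c) if f = (1/m_i)·Σ_{l=1}^d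 f_l as above with m_i < m_j, then |f(x)| ≤ 2/(m_i · m_j). -/
/-- `E < F` for finite sets of naturals: every element of `E` is less than
every element of `F` (vacuously true if one of them is empty). -/
def FinsetLT (E F : Finset ℕ) : Prop := ∀ a ∈ E, ∀ b ∈ F, a < b

/-- The convolution `M * N` of two families of finite subsets of `ℕ`: it consists of `∅`
together with all unions `E₁ ∪ … ∪ E_k` where `E₁ < … < E_k` are nonempty sets in `N`
and `{min E₁, …, min E_k} ∈ M`. -/
def SchreierConv (M N : Set (Finset ℕ)) : Set (Finset ℕ) :=
  {E | E = ∅ ∨ ∃ (k : ℕ) (Es : Fin k → Finset ℕ),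
    (∀ i, Es i ∈ N) ∧ (∀ i, (Es i).Nonempty) ∧
    (∀ i j : Fin k, i < j → FinsetLT (Es i) (Es j)) ∧
    (Finset.image (fun i => sInf (↑(Es i) : Set ℕ)) Finset.univ) ∈ M ∧
    E = Finset.univ.biUnion Es}

/-- The first Schreier family `S₁ = {E : #E ≤ min E} ∪ {∅}`. -/
def SchreierOne : Set (Finset ℕ) := {E | ∀ k ∈ E, E.card ≤ k}

/-- The Schreier families: `S₀` = singletons and `∅`, `S₁` as above,
`S_{n+1} = S₁ * S_n`. -/
def Schreier : ℕ → Set (Finset ℕ)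
  | 0 => {E | E.card ≤ 1}
  | 1 => SchreierOne
  | n + 2 => SchreierConv SchreierOne (Schreier (n + 1))

/-- The minimum of the support of an element of `c₀₀(ℕ) = ℕ →₀ ℝ`. -/
noncomputable def minsupp (f : ℕ →₀ ℝ) : ℕ := sInf (↑f.support : Set ℕ)

/-- The maximum of the support of an element of `c₀₀(ℕ)`. -/
noncomputable def maxsupp (f : ℕ →₀ ℝ) : ℕ := f.support.sup id

/-- The action of a functional `f ∈ c₀₀(ℕ)` on a vector `x ∈ c₀₀(ℕ)`:
`f(x) = ∑ₖ f(k)·x(k)`. -/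
noncomputable def ev (f x : ℕ →₀ ℝ) : ℝ := ∑ k ∈ f.support, f k * x k

/-- The seminorm induced on `c₀₀(ℕ)` by a set `W` of functionals:
`‖x‖_W = sup {f(x) : f ∈ W}`. -/
noncomputable def WNorm (W : Set (ℕ →₀ ℝ)) (x : ℕ →₀ ℝ) : ℝ :=
  sSup ((fun f => ev f x) '' W)

/-- A finite sequence of functionals in `c₀₀(ℕ)` is `S_n`-admissible if the supports are
nonempty and successive and the set of minima of the supports belongs to `S_n`. -/
def IsAdmissible (n : ℕ) {d : ℕ} (f : Fin d → (ℕ →₀ ℝ)) : Prop :=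
  (∀ l, f l ≠ 0) ∧
  (∀ l l' : Fin d, l < l' → ∀ a ∈ (f l).support, ∀ b ∈ (f l').support, a < b) ∧
  (Finset.image (fun l => minsupp (f l)) Finset.univ) ∈ Schreier n

/-- The sequence `m₁ = b`, `m_{j+1} = m_j ^ (m_j)` (0-indexed in Lean: `mpar b 0 = m₁`). -/
def mpar (b : ℕ) : ℕ → ℕ
  | 0 => b
  | j + 1 => mpar b j ^ mpar b j

/-- The sequence `n₁ = 1`, `n_{j+1} = 2 ^ (2 m_{j+1}) · n_j` (0-indexed in Lean). -/
def npar (b : ℕ) : ℕ → ℕ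
  | 0 => 1
  | j + 1 => 2 ^ (2 * mpar b (j + 1)) * npar b j

/-- The coefficients `(c_k)_{k ∈ F}` of an `(n, ε)`-basic special convex combination
`∑_{k ∈ F} c_k e_k`: a convex combination with `F ∈ S_n` and `∑_{k ∈ G} c_k < ε` for every
`G ⊆ F` with `G ∈ S_{n-1}`. -/
def IsBSCC (n : ℕ) (ε : ℝ) (F : Finset ℕ) (c : ℕ → ℝ) : Prop :=
  (∀ k ∈ F, 0 ≤ c k) ∧ (∑ k ∈ F, c k) = 1 ∧ F ∈ Schreier n ∧
  ∀ G ⊆ F, G ∈ Schreier (n - 1) → ∑ k ∈ G, c k < ε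

/-- The vector `∑_{k ∈ F} c_k e_k ∈ c₀₀(ℕ)`. -/
noncomputable def bvec (F : Finset ℕ) (c : ℕ → ℝ) : ℕ →₀ ℝ :=
  ∑ k ∈ F, c k • (Finsupp.single k 1 : ℕ →₀ ℝ)

/-- The `ℓ₁`-auxiliary norming set `W_aux^{(1)}`: the minimal subset of `c₀₀(ℕ)` containing
`±e_i^*` and closed under the operations `(S_{n_j + 1}, m_j)` (over the `ℓ₁`-parameters
`m_j = mpar 2 j`, `n_j = npar 2 j`). -/
inductive WAux1 : (ℕ →₀ ℝ) → Prop
  | pos (i : ℕ) : WAux1 (Finsupp.single i 1)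
  | neg (i : ℕ) : WAux1 (-(Finsupp.single i 1))
  | op (j d : ℕ) (g : Fin d → ℕ →₀ ℝ) (hg : ∀ l, WAux1 (g l))
      (hadm : IsAdmissible (npar 2 j + 1) g) :
      WAux1 ((mpar 2 j : ℝ)⁻¹ • ∑ l, g l)

section SchreierLemmas

open Finset

lemma schreier_zero : Schreier 0 = {E | E.card ≤ 1} := rfl
lemma schreier_one : Schreier 1 = SchreierOne := rfl
lemma schreier_two (n : ℕ) : Schreier (n+2) = SchreierConv SchreierOne (Schreier (n+1)) := rfl

lemma sinf_mem {E : Finset ℕ} (h : E.Nonempty) : sInf (↑E : Set ℕ) ∈ E := by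
  have : (↑E : Set ℕ).Nonempty := by exact_mod_cast h
  exact_mod_cast Nat.sInf_mem this

lemma sinf_le {E : Finset ℕ} {k : ℕ} (h : k ∈ E) : sInf (↑E : Set ℕ) ≤ k :=
  Nat.sInf_le (by exact_mod_cast h)

lemma schreier_empty (n : ℕ) : (∅ : Finset ℕ) ∈ Schreier n := by
  match n with
  | 0 => simp [schreier_zero]
  | 1 => intro k hk; simp at hk
  | n + 2 => exact Or.inl rfl

lemma schreier_pos : ∀ (n : ℕ) (E : Finset ℕ), E ∈ Schreier (n+1) → ∀ k ∈ E, 1 ≤ k := by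
  intro n
  induction n with
  | zero =>
    intro E hE k hk
    have := hE k hk
    have : 1 ≤ E.card := Finset.card_pos.2 ⟨k, hk⟩
    omega
  | succ n ih =>
    intro E hE k hk
    rcases hE with h | ⟨m, Es, hmem, hne, hord, hmin, hU⟩
    · subst h; simp at hk
    · subst hU
      rcases Finset.mem_biUnion.1 hk with ⟨i, _, hki⟩
      exact ih (Es i) (hmem i) k hki

end SchreierLemmas
section Spread
open Finset
lemma reindex {k : ℕ} (P : Fin k → Prop) [DecidablePred P] :
    ∃ (k' : ℕ) (σ : Fin k' → Fin k), k' ≤ k ∧ StrictMono σ ∧ (∀ i, P (σ i)) ∧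
      (∀ i, P i → ∃ i', σ i' = i) := by
  classical
  set s : Finset (Fin k) := Finset.univ.filter P with hs
  refine ⟨s.card, fun i => (s.orderIsoOfFin rfl i : Fin k), ?_, ?_, ?_, ?_⟩
  · simpa using Finset.card_filter_le Finset.univ P
  · intro a b hab
    exact_mod_cast (s.orderIsoOfFin rfl).strictMono hab
  · intro i
    have := (s.orderIsoOfFin rfl i).2
    simp only [hs, Finset.mem_filter] at this
    exact this.2
  · intro i hi
    obtain ⟨i', hi'⟩ := (s.orderIsoOfFin rfl).surjective ⟨i, by simp [hs, hi]⟩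
    exact ⟨i', by simp only [hi']⟩

lemma schreier_spread : ∀ (n : ℕ) (D D' : Finset ℕ) (θ : ℕ → ℕ),
    (∀ b ∈ D', θ b ∈ D) → (∀ b ∈ D', ∀ b' ∈ D', b < b' → θ b < θ b') →
    (∀ b ∈ D', θ b ≤ b) → D ∈ Schreier n → D' ∈ Schreier n := by
  intro n
  induction n using Nat.strong_induction_on with
  | _ n ih =>
  have hinj : ∀ (D' : Finset ℕ) (θ : ℕ → ℕ),
      (∀ b ∈ D', ∀ b' ∈ D', b < b' → θ b < θ b') → Set.InjOn θ D' := by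
    intro D' θ hmono a ha b hb hab
    rcases lt_trichotomy a b with h | h | h
    · exact absurd hab (ne_of_lt (hmono a ha b hb h))
    · exact h
    · exact absurd hab.symm (ne_of_lt (hmono b hb a ha h))
  match n with
  | 0 =>
    intro D D' θ hmap hmono hle hD
    have h1 : D'.card ≤ D.card :=
      Finset.card_le_card_of_injOn θ hmap (hinj D' θ hmono)
    exact le_trans h1 hD
  | 1 =>
    intro D D' θ hmap hmono hle hD
    intro b hb
    have h1 : D'.card ≤ D.card :=
      Finset.card_le_card_of_injOn θ hmap (hinj D' θ hmono)
    exact le_trans h1 (le_trans (hD (θ b) (hmap b hb)) (hle b hb))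
  | n + 2 =>
    intro D D' θ hmap hmono hle hD
    rcases hD with hD0 | ⟨m, Es, hmem, hne, hord, hmin, hU⟩
    · left
      subst hD0
      exact Finset.eq_empty_iff_forall_notMem.2 fun b hb => by simpa using hmap b hb
    · subst hU
      classical
      obtain ⟨k', σ, hk'le, hσmono, hσP, hσsurj⟩ :=
        reindex (fun i : Fin m => (D'.filter (fun b => θ b ∈ Es i)).Nonempty)
      set Es' : Fin k' → Finset ℕ := fun i => D'.filter (fun b => θ b ∈ Es (σ i)) with hEs'
      -- minima of Es are strictly monotone
      have hminmono : ∀ i i' : Fin m, i < i' →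
          sInf (↑(Es i) : Set ℕ) < sInf (↑(Es i') : Set ℕ) := by
        intro i i' hii
        exact hord i i' hii _ (sinf_mem (hne i)) _ (sinf_mem (hne i'))
      right
      refine ⟨k', Es', ?_, ?_, ?_, ?_, ?_⟩
      · intro i
        refine ih (n+1) (by omega) (Es (σ i)) (Es' i) θ ?_ ?_ ?_ (hmem (σ i))
        · intro b hb; exact (Finset.mem_filter.1 hb).2
        · intro b hb b' hb' hbb'
          exact hmono b (Finset.mem_filter.1 hb).1 b' (Finset.mem_filter.1 hb').1 hbb'
        · intro b hb; exact hle b (Finset.mem_filter.1 hb).1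
      · intro i; exact hσP i
      · intro i i' hii b hb b' hb'
        have h1 : θ b ∈ Es (σ i) := (Finset.mem_filter.1 hb).2
        have h2 : θ b' ∈ Es (σ i') := (Finset.mem_filter.1 hb').2
        have h3 : θ b < θ b' := hord (σ i) (σ i') (hσmono hii) _ h1 _ h2
        rcases lt_trichotomy b b' with h | h | h
        · exact h
        · exact absurd h3 (by rw [h]; exact lt_irrefl _)
        · exact absurd h3 (not_lt.2 (le_of_lt
            (hmono b' (Finset.mem_filter.1 hb').1 b (Finset.mem_filter.1 hb).1 h)))
      · -- minima image in SchreierOne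
        intro a ha
        rcases Finset.mem_image.1 ha with ⟨i₀, _, hi₀⟩
        have hne' : (Es' i₀).Nonempty := hσP i₀
        have hamem : a ∈ Es' i₀ := by rw [← hi₀]; exact sinf_mem hne'
        have haD' : a ∈ D' := (Finset.mem_filter.1 hamem).1
        have hθa : θ a ∈ Es (σ i₀) := (Finset.mem_filter.1 hamem).2
        -- card of new image ≤ k'
        have hc1 : (Finset.image (fun i => sInf (↑(Es' i) : Set ℕ)) Finset.univ).card ≤ k' := by
          exact le_trans (Finset.card_image_le) (by simp)
        -- card of old image = m
        have hc2 : (Finset.image (fun i => sInf (↑(Es i) : Set ℕ)) Finset.univ).card = m := by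
          rw [Finset.card_image_of_injective _ (fun i i' hii => ?_)]
          · simp
          · rcases lt_trichotomy i i' with h | h | h
            · exact absurd hii (ne_of_lt (hminmono _ _ h))
            · exact h
            · exact absurd hii.symm (ne_of_lt (hminmono _ _ h))
        have hc3 : m ≤ sInf (↑(Es (σ i₀)) : Set ℕ) := by
          have := hmin (sInf (↑(Es (σ i₀)) : Set ℕ))
            (Finset.mem_image.2 ⟨σ i₀, Finset.mem_univ _, rfl⟩)
          omega
        have hc4 : sInf (↑(Es (σ i₀)) : Set ℕ) ≤ θ a := sinf_le hθa
        have hc5 : θ a ≤ a := hle a haD'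
        omega
      · ext b
        simp only [Finset.mem_biUnion, Finset.mem_univ, true_and]
        constructor
        · intro hb
          have : θ b ∈ Finset.univ.biUnion Es := hmap b hb
          rcases Finset.mem_biUnion.1 this with ⟨i, _, hbi⟩
          have hPi : (D'.filter (fun b => θ b ∈ Es i)).Nonempty :=
            ⟨b, Finset.mem_filter.2 ⟨hb, hbi⟩⟩
          obtain ⟨i', hi'⟩ := hσsurj i hPi
          exact ⟨i', Finset.mem_filter.2 ⟨hb, by rw [hi']; exact hbi⟩⟩
        · rintro ⟨i, hbi⟩
          exact (Finset.mem_filter.1 hbi).1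

lemma schreier_subset {n : ℕ} {D D' : Finset ℕ} (hsub : D' ⊆ D) (hD : D ∈ Schreier n) :
    D' ∈ Schreier n :=
  schreier_spread n D D' id (fun b hb => hsub hb) (fun _ _ _ _ h => h) (fun _ _ => le_rfl) hD

end Spread
section MonoUnion
open Finset

lemma sinf_singleton (k : ℕ) : sInf (↑({k} : Finset ℕ) : Set ℕ) = k := by
  have h := sinf_mem (⟨k, Finset.mem_singleton_self k⟩ : ({k} : Finset ℕ).Nonempty)
  simpa using h

lemma schreier_singleton {k : ℕ} (hk : 1 ≤ k) : ∀ n, ({k} : Finset ℕ) ∈ Schreier n := by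
  intro n
  induction n using Nat.strong_induction_on with
  | _ n ih =>
  match n with
  | 0 => simp [schreier_zero]
  | 1 => intro a ha; simp at ha; subst ha; simpa using hk
  | n + 2 =>
    right
    refine ⟨1, fun _ => {k}, fun _ => ih (n+1) (by omega), fun _ => ⟨k, by simp⟩,
      ?_, ?_, ?_⟩
    · intro i j hij; exact absurd hij (by omega)
    · intro a ha
      refine le_trans (le_trans Finset.card_image_le (by simp : (Finset.univ : Finset (Fin 1)).card ≤ 1)) ?_
      simp only [Finset.mem_image] at ha
      rcases ha with ⟨i, _, hi⟩
      rw [sinf_singleton] at hi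
      omega
    · ext a; simp

lemma schreier_succ {n : ℕ} {E : Finset ℕ} (hE : E ∈ Schreier n)
    (hpos : ∀ k ∈ E, 1 ≤ k) : E ∈ Schreier (n+1) := by
  match n with
  | 0 =>
    intro a ha
    exact le_trans hE (hpos a ha)
  | n + 1 =>
    rcases E.eq_empty_or_nonempty with h | h
    · subst h; exact schreier_empty _
    · right
      refine ⟨1, fun _ => E, fun _ => hE, fun _ => h, ?_, ?_, ?_⟩
      · intro i j hij; exact absurd hij (by omega)
      · intro a ha
        refine le_trans (le_trans Finset.card_image_le (by simp : (Finset.univ : Finset (Fin 1)).card ≤ 1)) ?_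
        simp only [Finset.mem_image] at ha
        rcases ha with ⟨i, _, hi⟩
        have h1 : sInf (↑E : Set ℕ) ∈ E := sinf_mem h
        have h2 := hpos _ h1
        omega
      · ext a; simp

lemma schreier_mono {p q : ℕ} (hpq : p ≤ q) {E : Finset ℕ} (hpos : ∀ k ∈ E, 1 ≤ k)
    (hE : E ∈ Schreier p) : E ∈ Schreier q := by
  induction q with
  | zero => simpa [Nat.le_zero.1 hpq] using hE
  | succ q ih =>
    rcases Nat.lt_or_ge p (q+1) with h | h
    · exact schreier_succ (ih (by omega)) hpos
    · have : p = q + 1 := by omega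
      subst this; exact hE

end MonoUnion
section Union
open Finset

lemma schreier_union : ∀ (p q k : ℕ) (Es : Fin k → Finset ℕ),
    (∀ i, Es i ∈ Schreier q) → (∀ i, (Es i).Nonempty) →
    (∀ i i' : Fin k, i < i' → FinsetLT (Es i) (Es i')) →
    Finset.image (fun i => sInf (↑(Es i) : Set ℕ)) Finset.univ ∈ Schreier p →
    Finset.univ.biUnion Es ∈ Schreier (p + q) := by
  intro p
  induction p using Nat.strong_induction_on with
  | _ p ih =>
  match p with
  | 0 =>
    intro q k Es hmem hne hord hmin
    have hsmono : StrictMono (fun i : Fin k => sInf (↑(Es i) : Set ℕ)) := by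
      intro i i' hii
      exact hord i i' hii _ (sinf_mem (hne i)) _ (sinf_mem (hne i'))
    have hki : (Finset.image (fun i => sInf (↑(Es i) : Set ℕ)) Finset.univ).card = k := by
      rw [Finset.card_image_of_injective _ hsmono.injective]; simp
    have hk1 : k ≤ 1 := by
      have h := hmin
      simp only [schreier_zero, Set.mem_setOf_eq] at h
      omega
    match k with
    | 0 => simpa using schreier_empty q
    | 1 =>
      have : Finset.univ.biUnion Es = Es 0 := by
        ext a; simp [Fin.forall_fin_one, Fin.exists_fin_one]
      rw [this]; simpa using hmem 0
  | 1 =>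
    intro q k Es hmem hne hord hmin
    match q with
    | 0 =>
      have hsing : ∀ i, Es i = {sInf (↑(Es i) : Set ℕ)} := by
        intro i
        have h1 : (Es i).card = 1 := le_antisymm (hmem i) (Finset.card_pos.2 (hne i))
        rcases Finset.card_eq_one.1 h1 with ⟨a, ha⟩
        rw [ha, sinf_singleton]
      have : Finset.univ.biUnion Es =
          Finset.image (fun i => sInf (↑(Es i) : Set ℕ)) Finset.univ := by
        ext a
        simp only [Finset.mem_biUnion, Finset.mem_univ, true_and, Finset.mem_image]
        constructor
        · rintro ⟨i, hi⟩
          refine ⟨i, ?_⟩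
          rw [hsing i] at hi
          exact (Finset.mem_singleton.1 hi).symm
        · rintro ⟨i, hi⟩
          refine ⟨i, ?_⟩
          rw [hsing i]
          exact Finset.mem_singleton.2 hi.symm
      rw [this]; exact hmin
    | q + 1 =>
      have hidx : 1 + (q + 1) = q + 2 := by omega
      rw [hidx]
      exact Or.inr ⟨k, Es, hmem, hne, hord, hmin, rfl⟩
  | p + 2 =>
    intro q k Es hmem hne hord hmin
    have hsmono : StrictMono (fun i : Fin k => sInf (↑(Es i) : Set ℕ)) := by
      intro i i' hii
      exact hord i i' hii _ (sinf_mem (hne i)) _ (sinf_mem (hne i'))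
    rcases hmin with hD0 | ⟨r, Ds, hDmem, hDne, hDord, hDmin, hDU⟩
    · -- image is empty, so k = 0
      have hk : k = 0 := by
        by_contra hk
        have : (0 : ℕ) < k := Nat.pos_of_ne_zero hk
        have : sInf (↑(Es ⟨0, this⟩) : Set ℕ) ∈
            Finset.image (fun i => sInf (↑(Es i) : Set ℕ)) Finset.univ :=
          Finset.mem_image.2 ⟨_, Finset.mem_univ _, rfl⟩
        rw [hD0] at this; simp at this
      subst hk
      simpa using schreier_empty (p + 2 + q)
    · classical
      -- membership of minima in D
      have hmemD : ∀ i : Fin k, ∃ m : Fin r, sInf (↑(Es i) : Set ℕ) ∈ Ds m := by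
        intro i
        have : sInf (↑(Es i) : Set ℕ) ∈ Finset.univ.biUnion Ds := by
          rw [← hDU]
          exact Finset.mem_image.2 ⟨i, Finset.mem_univ _, rfl⟩
        rcases Finset.mem_biUnion.1 this with ⟨m, _, hm⟩
        exact ⟨m, hm⟩
      have H : ∀ m : Fin r, ∃ (k' : ℕ) (σ : Fin k' → Fin k), k' ≤ k ∧ StrictMono σ ∧
          (∀ i₀, sInf (↑(Es (σ i₀)) : Set ℕ) ∈ Ds m) ∧
          (∀ i, sInf (↑(Es i) : Set ℕ) ∈ Ds m → ∃ i₀, σ i₀ = i) :=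
        fun m => reindex (fun i => sInf (↑(Es i) : Set ℕ) ∈ Ds m)
      choose kk σ hkk hσmono hσP hσsurj using H
      set U : Fin r → Finset ℕ := fun m => Finset.univ.biUnion (fun i₀ => Es (σ m i₀)) with hUdef
      -- Ds m elements are of the form sInf (Es i) with i in class m
      have hDsrep : ∀ (m : Fin r) (a : ℕ), a ∈ Ds m →
          ∃ i₀ : Fin (kk m), sInf (↑(Es (σ m i₀)) : Set ℕ) = a := by
        intro m a ha
        have haD : a ∈ Finset.univ.biUnion Ds := Finset.mem_biUnion.2 ⟨m, Finset.mem_univ _, ha⟩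
        rw [← hDU] at haD
        rcases Finset.mem_image.1 haD with ⟨i, _, hi⟩
        have hPi : sInf (↑(Es i) : Set ℕ) ∈ Ds m := by rw [hi]; exact ha
        rcases hσsurj m i hPi with ⟨i₀, hi₀⟩
        exact ⟨i₀, by rw [hi₀, hi]⟩
      have hUne : ∀ m, (U m).Nonempty := by
        intro m
        rcases hDne m with ⟨a, ha⟩
        rcases hDsrep m a ha with ⟨i₀, _⟩
        rcases hne (σ m i₀) with ⟨b, hb⟩
        exact ⟨b, Finset.mem_biUnion.2 ⟨i₀, Finset.mem_univ _, hb⟩⟩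
      have hUmem : ∀ m, U m ∈ Schreier (p + 1 + q) := by
        intro m
        refine ih (p+1) (by omega) q (kk m) (fun i₀ => Es (σ m i₀))
          (fun i₀ => hmem _) (fun i₀ => hne _)
          (fun i₀ i₀' h => hord _ _ (hσmono m h)) ?_
        have himg : Finset.image (fun i₀ => sInf (↑(Es (σ m i₀)) : Set ℕ)) Finset.univ
            = Ds m := by
          ext a
          simp only [Finset.mem_image, Finset.mem_univ, true_and]
          constructor
          · rintro ⟨i₀, hi₀⟩; rw [← hi₀]; exact hσP m i₀
          · intro ha; exact hDsrep m a ha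
        rw [himg]; exact hDmem m
      have hUord : ∀ m m' : Fin r, m < m' → FinsetLT (U m) (U m') := by
        intro m m' hmm a ha b hb
        rcases Finset.mem_biUnion.1 ha with ⟨i₀, _, hai⟩
        rcases Finset.mem_biUnion.1 hb with ⟨i₀', _, hbi⟩
        have h1 : sInf (↑(Es (σ m i₀)) : Set ℕ) < sInf (↑(Es (σ m' i₀')) : Set ℕ) :=
          hDord m m' hmm _ (hσP m i₀) _ (hσP m' i₀')
        have h2 : σ m i₀ < σ m' i₀' := hsmono.lt_iff_lt.1 h1
        exact hord _ _ h2 a hai b hbi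
      have hUinf : ∀ m, sInf (↑(U m) : Set ℕ) = sInf (↑(Ds m) : Set ℕ) := by
        intro m
        apply le_antisymm
        · rcases hDsrep m _ (sinf_mem (hDne m)) with ⟨i₀, hi₀⟩
          have : sInf (↑(Es (σ m i₀)) : Set ℕ) ∈ U m :=
            Finset.mem_biUnion.2 ⟨i₀, Finset.mem_univ _, sinf_mem (hne _)⟩
          calc sInf (↑(U m) : Set ℕ) ≤ sInf (↑(Es (σ m i₀)) : Set ℕ) := sinf_le this
            _ = _ := hi₀
        · have h1 : sInf (↑(U m) : Set ℕ) ∈ U m := sinf_mem (hUne m)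
          rcases Finset.mem_biUnion.1 h1 with ⟨i₀, _, hi₀⟩
          calc sInf (↑(Ds m) : Set ℕ) ≤ sInf (↑(Es (σ m i₀)) : Set ℕ) := sinf_le (hσP m i₀)
            _ ≤ sInf (↑(U m) : Set ℕ) := sinf_le hi₀
      have hUU : Finset.univ.biUnion Es = Finset.univ.biUnion U := by
        ext a
        simp only [Finset.mem_biUnion, Finset.mem_univ, true_and]
        constructor
        · rintro ⟨i, hi⟩
          rcases hmemD i with ⟨m, hm⟩
          rcases hσsurj m i hm with ⟨i₀, hi₀⟩
          exact ⟨m, Finset.mem_biUnion.2 ⟨i₀, Finset.mem_univ _, by rw [hi₀]; exact hi⟩⟩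
        · rintro ⟨m, hm⟩
          rcases Finset.mem_biUnion.1 hm with ⟨i₀, _, hi₀⟩
          exact ⟨σ m i₀, hi₀⟩
      have hidx : p + 2 + q = (p + q) + 2 := by omega
      rw [hidx]
      refine Or.inr ⟨r, U, ?_, hUne, hUord, ?_, hUU⟩
      · intro m
        have : p + 1 + q = p + q + 1 := by omega
        rw [← this]; exact hUmem m
      · have : Finset.image (fun m => sInf (↑(U m) : Set ℕ)) Finset.univ
            = Finset.image (fun m => sInf (↑(Ds m) : Set ℕ)) Finset.univ := by
          apply Finset.image_congr
          intro m _
          exact hUinf m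
        rw [this]; exact hDmin
end Union
section Glue
open Finset

lemma minsupp_mem {f : ℕ →₀ ℝ} (hf : f ≠ 0) : minsupp f ∈ f.support :=
  sinf_mem (Finsupp.support_nonempty_iff.2 hf)

lemma minsupp_le {f : ℕ →₀ ℝ} {k : ℕ} (hk : k ∈ f.support) : minsupp f ≤ k :=
  sinf_le hk

lemma glue {d : ℕ} (g : Fin d → ℕ →₀ ℝ) (G : Fin d → Finset ℕ) (N Q : ℕ)
    (hgne : ∀ l, g l ≠ 0)
    (hord : ∀ l l' : Fin d, l < l' → ∀ a ∈ (g l).support, ∀ b ∈ (g l').support, a < b)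
    (hmin : Finset.image (fun l => minsupp (g l)) Finset.univ ∈ Schreier N)
    (hsub : ∀ l, G l ⊆ (g l).support)
    (hQ : ∀ l, G l ∈ Schreier Q) :
    Finset.univ.biUnion G ∈ Schreier (N + Q) := by
  classical
  obtain ⟨k', σ, hk'le, hσmono, hσP, hσsurj⟩ := reindex (fun l : Fin d => (G l).Nonempty)
  set Es : Fin k' → Finset ℕ := fun i => G (σ i) with hEs
  have hbieq : Finset.univ.biUnion G = Finset.univ.biUnion Es := by
    ext a
    simp only [Finset.mem_biUnion, Finset.mem_univ, true_and]
    constructor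
    · rintro ⟨l, hl⟩
      rcases hσsurj l ⟨a, hl⟩ with ⟨i, hi⟩
      exact ⟨i, show a ∈ G (σ i) by rw [hi]; exact hl⟩
    · rintro ⟨i, hi⟩
      exact ⟨σ i, hi⟩
  rw [hbieq]
  have hEord : ∀ i i' : Fin k', i < i' → FinsetLT (Es i) (Es i') := by
    intro i i' hii a ha b hb
    exact hord (σ i) (σ i') (hσmono hii) a (hsub _ ha) b (hsub _ hb)
  refine schreier_union N Q k' Es (fun i => hQ _) (fun i => hσP i) hEord ?_
  -- minima of the G-pieces spread the minsupp image
  have hEsmono : StrictMono (fun i : Fin k' => sInf (↑(Es i) : Set ℕ)) := by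
    intro i i' hii
    exact hEord i i' hii _ (sinf_mem (hσP i)) _ (sinf_mem (hσP i'))
  set θ : ℕ → ℕ := fun b =>
    if h : ∃ i : Fin k', b = sInf (↑(Es i) : Set ℕ) then minsupp (g (σ h.choose)) else 0
    with hθ
  have hθval : ∀ i : Fin k', θ (sInf (↑(Es i) : Set ℕ)) = minsupp (g (σ i)) := by
    intro i
    have hex : ∃ i' : Fin k', sInf (↑(Es i) : Set ℕ) = sInf (↑(Es i') : Set ℕ) := ⟨i, rfl⟩
    have hch : hex.choose = i := by
      by_contra hne'
      rcases lt_or_gt_of_ne hne' with h | h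
      · exact absurd hex.choose_spec.symm (ne_of_lt (hEsmono h))
      · exact absurd hex.choose_spec (ne_of_lt (hEsmono h))
    rw [hθ]; simp only [dif_pos hex]; rw [hch]
  have hminsuppmono : ∀ l l' : Fin d, l < l' → minsupp (g l) < minsupp (g l') := by
    intro l l' hll
    exact hord l l' hll _ (minsupp_mem (hgne l)) _ (minsupp_mem (hgne l'))
  refine schreier_spread N _ _ θ ?_ ?_ ?_ hmin
  · intro b hb
    rcases Finset.mem_image.1 hb with ⟨i, _, hi⟩
    rw [← hi, hθval i]
    exact Finset.mem_image.2 ⟨σ i, Finset.mem_univ _, rfl⟩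
  · intro b hb b' hb' hbb'
    rcases Finset.mem_image.1 hb with ⟨i, _, hi⟩
    rcases Finset.mem_image.1 hb' with ⟨i', _, hi'⟩
    rw [← hi, ← hi'] at hbb' ⊢
    rw [hθval i, hθval i']
    have : i < i' := hEsmono.lt_iff_lt.1 hbb'
    exact hminsuppmono _ _ (hσmono this)
  · intro b hb
    rcases Finset.mem_image.1 hb with ⟨i, _, hi⟩
    rw [← hi, hθval i]
    exact le_trans (minsupp_le (hsub _ (sinf_mem (hσP i)))) le_rfl

end Glue

section Params

lemma mpar_ge_two : ∀ j, 2 ≤ mpar 2 j := by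
  intro j
  induction j with
  | zero => simp [mpar]
  | succ j ih =>
    show 2 ≤ mpar 2 j ^ mpar 2 j
    calc 2 ≤ mpar 2 j := ih
      _ = mpar 2 j ^ 1 := (pow_one _).symm
      _ ≤ mpar 2 j ^ mpar 2 j := Nat.pow_le_pow_right (by omega) (by omega)

lemma mpar_lt_succ (j : ℕ) : mpar 2 j < mpar 2 (j + 1) := by
  have h := mpar_ge_two j
  show mpar 2 j < mpar 2 j ^ mpar 2 j
  calc mpar 2 j = mpar 2 j ^ 1 := (pow_one _).symm
    _ < mpar 2 j ^ mpar 2 j := Nat.pow_lt_pow_right (by omega) (by omega)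

lemma mpar_mono {i j : ℕ} (h : i ≤ j) : mpar 2 i ≤ mpar 2 j := by
  induction j with
  | zero => simp [Nat.le_zero.1 h]
  | succ j ih =>
    rcases Nat.lt_or_ge i (j+1) with h' | h'
    · exact le_trans (ih (by omega)) (le_of_lt (mpar_lt_succ j))
    · have : i = j + 1 := by omega
      subst this; rfl

lemma lt_of_mpar_lt {i j : ℕ} (h : mpar 2 i < mpar 2 j) : i < j := by
  by_contra h'
  exact absurd (mpar_mono (not_lt.1 h')) (by omega)

lemma npar_ge_one : ∀ j, 1 ≤ npar 2 j := by
  intro j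
  induction j with
  | zero => simp [npar]
  | succ j ih =>
    show 1 ≤ 2 ^ (2 * mpar 2 (j+1)) * npar 2 j
    have : 1 ≤ 2 ^ (2 * mpar 2 (j+1)) := Nat.one_le_two_pow
    exact Nat.one_le_iff_ne_zero.2 (Nat.mul_ne_zero (by omega) (by omega))

lemma npar_mono {i j : ℕ} (h : i ≤ j) : npar 2 i ≤ npar 2 j := by
  induction j with
  | zero => simp [Nat.le_zero.1 h]
  | succ j ih =>
    rcases Nat.lt_or_ge i (j+1) with h' | h'
    · refine le_trans (ih (by omega)) ?_
      show npar 2 j ≤ 2 ^ (2 * mpar 2 (j+1)) * npar 2 j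
      have h1 : 1 ≤ 2 ^ (2 * mpar 2 (j+1)) := Nat.one_le_two_pow
      nlinarith [npar_ge_one j]
    · have : i = j + 1 := by omega
      subst this; rfl

lemma four_pow_ge {m : ℕ} (hm : 2 ≤ m) : 4 * m + 3 ≤ 4 ^ m := by
  induction m with
  | zero => omega
  | succ m ih =>
    rcases Nat.lt_or_ge m 2 with h | h
    · interval_cases m
      · omega
      · norm_num
    · have h1 := ih h
      have h2 : 4 ^ (m + 1) = 4 * 4 ^ m := by ring
      omega

lemma key_numeric {j : ℕ} (hj : 1 ≤ j) :
    (2 * mpar 2 j + 1) * (npar 2 (j - 1) + 1) ≤ npar 2 j - 1 := by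
  obtain ⟨j', rfl⟩ : ∃ j', j = j' + 1 := ⟨j - 1, by omega⟩
  simp only [Nat.add_sub_cancel]
  have hm := mpar_ge_two (j' + 1)
  have hn := npar_ge_one j'
  have hrec : npar 2 (j' + 1) = 2 ^ (2 * mpar 2 (j' + 1)) * npar 2 j' := rfl
  have hpow : (2:ℕ) ^ (2 * mpar 2 (j' + 1)) = 4 ^ mpar 2 (j' + 1) := by
    rw [pow_mul]; norm_num
  rw [hpow] at hrec
  have h4 := four_pow_ge hm
  have key : (2 * mpar 2 (j'+1) + 1) * (npar 2 j' + 1) + 1 ≤ 4 ^ mpar 2 (j'+1) * npar 2 j' := by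
    nlinarith
  omega

lemma mpar_le_two_pow (j : ℕ) : mpar 2 j ≤ 2 ^ (2 * mpar 2 j) := by
  have h1 : mpar 2 j < 2 ^ mpar 2 j := Nat.lt_two_pow_self
  have h2 : 2 ^ mpar 2 j ≤ 2 ^ (2 * mpar 2 j) := Nat.pow_le_pow_right (by omega) (by omega)
  omega

end Params
section Analytic
open Finset

lemma bvec_apply (F : Finset ℕ) (c : ℕ → ℝ) (k : ℕ) :
    bvec F c k = if k ∈ F then c k else 0 := by
  classical
  rw [bvec, Finsupp.finset_sum_apply]
  have h : ∀ k' ∈ F, (c k' • (Finsupp.single k' 1 : ℕ →₀ ℝ)) k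
      = if k' = k then c k' else 0 := by
    intro k' _
    rw [Finsupp.smul_apply, Finsupp.single_apply]
    split <;> simp
  rw [Finset.sum_congr rfl h, Finset.sum_ite_eq' F k (fun k' => c k')]

lemma ev_bvec (f : ℕ →₀ ℝ) (F : Finset ℕ) (c : ℕ → ℝ) :
    ev f (bvec F c) = ∑ k ∈ F, f k * c k := by
  classical
  have h1 : ev f (bvec F c) = ∑ k ∈ f.support ∪ F, f k * (bvec F c) k :=
    Finset.sum_subset Finset.subset_union_left (fun k _ hk => by
      rw [Finsupp.notMem_support_iff.1 hk, zero_mul])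
  have h2 : ∑ k ∈ f.support ∪ F, f k * (bvec F c) k = ∑ k ∈ F, f k * (bvec F c) k :=
    (Finset.sum_subset Finset.subset_union_right (fun k _ hk => by
      rw [bvec_apply, if_neg hk, mul_zero])).symm
  have h3 : ∑ k ∈ F, f k * (bvec F c) k = ∑ k ∈ F, f k * c k :=
    Finset.sum_congr rfl (fun k hk => by rw [bvec_apply, if_pos hk])
  rw [h1, h2, h3]

lemma ev_smul (a : ℝ) (f : ℕ →₀ ℝ) (F : Finset ℕ) (c : ℕ → ℝ) :
    ev (a • f) (bvec F c) = a * ev f (bvec F c) := by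
  rw [ev_bvec, ev_bvec, Finset.mul_sum]
  exact Finset.sum_congr rfl (fun k _ => by
    rw [Finsupp.smul_apply, smul_eq_mul, mul_assoc])

lemma ev_sum {d : ℕ} (g : Fin d → ℕ →₀ ℝ) (F : Finset ℕ) (c : ℕ → ℝ) :
    ev (∑ l, g l) (bvec F c) = ∑ l, ev (g l) (bvec F c) := by
  rw [ev_bvec]
  have h : ∀ k ∈ F, (∑ l, g l) k * c k = ∑ l, g l k * c k := by
    intro k _
    rw [Finsupp.finset_sum_apply, Finset.sum_mul]
  rw [Finset.sum_congr rfl h, Finset.sum_comm]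
  exact Finset.sum_congr rfl (fun l _ => (ev_bvec _ _ _).symm)

lemma waux_bdd : ∀ f, WAux1 f → ∀ k, |f k| ≤ 1 := by
  intro f hf
  induction hf with
  | pos i =>
    intro k
    rw [Finsupp.single_apply]
    split <;> simp
  | neg i =>
    intro k
    rw [Finsupp.coe_neg, Pi.neg_apply, abs_neg, Finsupp.single_apply]
    split <;> simp
  | op j d g hg hadm ih =>
    intro k
    rw [Finsupp.smul_apply, smul_eq_mul, Finsupp.finset_sum_apply]
    have hm : (1:ℝ) ≤ (mpar 2 j : ℝ) := by
      exact_mod_cast le_trans (by norm_num) (mpar_ge_two j)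
    have habs : |∑ l, g l k| ≤ 1 := by
      by_cases hz : ∀ l, g l k = 0
      · rw [Finset.sum_congr rfl (fun l _ => hz l)]
        simp
      · push_neg at hz
        obtain ⟨l0, hl0⟩ := hz
        have hsum : ∑ l, g l k = g l0 k := by
          refine Finset.sum_eq_single l0 (fun l _ hne => ?_) (by simp)
          by_contra hlk
          have hk1 : k ∈ (g l).support := Finsupp.mem_support_iff.2 hlk
          have hk2 : k ∈ (g l0).support := Finsupp.mem_support_iff.2 hl0
          rcases lt_or_gt_of_ne hne with h | h
          · exact absurd (hadm.2.1 l l0 h k hk1 k hk2) (lt_irrefl k)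
          · exact absurd (hadm.2.1 l0 l h k hk2 k hk1) (lt_irrefl k)
        rw [hsum]
        exact ih l0 k
    calc |(mpar 2 j:ℝ)⁻¹ * ∑ l, g l k| = (mpar 2 j:ℝ)⁻¹ * |∑ l, g l k| := by
          rw [abs_mul, abs_of_nonneg (inv_nonneg.2 (by linarith))]
      _ ≤ 1 * 1 := by
          apply mul_le_mul _ habs (abs_nonneg _) (by norm_num)
          rw [inv_le_one_iff₀]
          right; exact hm
      _ = 1 := by norm_num

lemma abs_ev_le_mass {F : Finset ℕ} {c : ℕ → ℝ} (hc0 : ∀ k ∈ F, 0 ≤ c k)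
    {f : ℕ →₀ ℝ} (hb : ∀ k, |f k| ≤ 1) :
    |ev f (bvec F c)| ≤ ∑ k ∈ f.support ∩ F, c k := by
  classical
  rw [ev_bvec]
  calc |∑ k ∈ F, f k * c k| ≤ ∑ k ∈ F, |f k * c k| := Finset.abs_sum_le_sum_abs _ _
    _ = ∑ k ∈ F, |f k| * c k := Finset.sum_congr rfl (fun k hk => by
        rw [abs_mul, abs_of_nonneg (hc0 k hk)])
    _ ≤ ∑ k ∈ F, (if k ∈ f.support then c k else 0) := by
        refine Finset.sum_le_sum (fun k hk => ?_)
        by_cases hks : k ∈ f.support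
        · rw [if_pos hks]
          exact mul_le_of_le_one_left (hc0 k hk) (hb k)
        · rw [if_neg hks, Finsupp.notMem_support_iff.1 hks, abs_zero, zero_mul]
    _ = ∑ k ∈ F.filter (· ∈ f.support), c k := (Finset.sum_filter _ _).symm
    _ = ∑ k ∈ f.support ∩ F, c k := by
        rw [Finset.filter_mem_eq_inter, Finset.inter_comm]

lemma sum_biUnion_parts {d : ℕ} (S : Fin d → Finset ℕ)
    (hdisj : ∀ l l' : Fin d, l ≠ l' → Disjoint (S l) (S l')) (c : ℕ → ℝ) :
    ∑ k ∈ Finset.univ.biUnion S, c k = ∑ l, ∑ k ∈ S l, c k :=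
  Finset.sum_biUnion (fun a _ b _ hab => hdisj a b hab)

lemma supp_disj {d : ℕ} {g : Fin d → ℕ →₀ ℝ}
    (hord : ∀ l l' : Fin d, l < l' → ∀ a ∈ (g l).support, ∀ b ∈ (g l').support, a < b) :
    ∀ l l' : Fin d, l ≠ l' → Disjoint (g l).support (g l').support := by
  intro l l' hne
  rw [Finset.disjoint_left]
  intro a hal hal'
  rcases lt_or_gt_of_ne hne with h | h
  · exact absurd (hord l l' h a hal a hal') (lt_irrefl a)
  · exact absurd (hord l' l h a hal' a hal) (lt_irrefl a)

lemma supp_comb {d : ℕ} (g : Fin d → ℕ →₀ ℝ)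
    (hord : ∀ l l' : Fin d, l < l' → ∀ a ∈ (g l).support, ∀ b ∈ (g l').support, a < b)
    {m : ℝ} (hm : m ≠ 0) :
    (m • ∑ l, g l).support = Finset.univ.biUnion (fun l => (g l).support) := by
  rw [Finsupp.support_smul_eq hm]
  exact Finsupp.support_sum_eq_biUnion _ (fun l l' hne => supp_disj hord l l' hne)

lemma inter_biUnion_parts {d : ℕ} (S : Fin d → Finset ℕ) (F : Finset ℕ) :
    (Finset.univ.biUnion S) ∩ F = Finset.univ.biUnion (fun l => S l ∩ F) := by
  ext a
  simp only [Finset.mem_inter, Finset.mem_biUnion, Finset.mem_univ, true_and]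
  constructor
  · rintro ⟨⟨l, hl⟩, hF⟩; exact ⟨l, hl, hF⟩
  · rintro ⟨l, hl, hF⟩
    exact ⟨⟨l, hl⟩, hF⟩

lemma mass_split {d : ℕ} (g : Fin d → ℕ →₀ ℝ)
    (hord : ∀ l l' : Fin d, l < l' → ∀ a ∈ (g l).support, ∀ b ∈ (g l').support, a < b)
    {m : ℝ} (hm : m ≠ 0) (F : Finset ℕ) (c : ℕ → ℝ) :
    ∑ k ∈ ((m • ∑ l, g l).support ∩ F), c k = ∑ l, ∑ k ∈ (g l).support ∩ F, c k := by
  rw [supp_comb g hord hm, inter_biUnion_parts]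
  exact sum_biUnion_parts _ (fun l l' hne =>
    Finset.disjoint_of_subset_left Finset.inter_subset_left
      (Finset.disjoint_of_subset_right Finset.inter_subset_left (supp_disj hord l l' hne))) c

end Analytic
section Key
open Finset

lemma key_estimate (j : ℕ) (hj : 1 ≤ j) (F : Finset ℕ) (c : ℕ → ℝ)
    (hc0 : ∀ k ∈ F, 0 ≤ c k) (hFpos : ∀ k ∈ F, 1 ≤ k) :
    ∀ (f : ℕ →₀ ℝ), WAux1 f → ∀ (t : ℕ) (π T : ℝ), 0 < π → 0 < T →
      T ≤ π * 2 ^ t → T ≤ π * (mpar 2 j : ℝ) →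
      ∃ G : Finset ℕ, G ⊆ f.support ∩ F ∧ G ∈ Schreier (t * (npar 2 (j-1) + 1)) ∧
        |ev f (bvec F c)| ≤ (∑ k ∈ G, c k) + (π / T) * ∑ k ∈ f.support ∩ F, c k := by
  have hsingle : ∀ (i : ℕ) (f : ℕ →₀ ℝ), f.support = {i} → (∀ k, |f k| ≤ 1) →
      ∀ (t : ℕ) (π T : ℝ), 0 < π → 0 < T →
      ∃ G : Finset ℕ, G ⊆ f.support ∩ F ∧ G ∈ Schreier (t * (npar 2 (j-1) + 1)) ∧
        |ev f (bvec F c)| ≤ (∑ k ∈ G, c k) + (π / T) * ∑ k ∈ f.support ∩ F, c k := by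
    intro i f hsupp hbdd t π T hπ hT
    classical
    have hmassnn : (0:ℝ) ≤ ∑ k ∈ f.support ∩ F, c k :=
      Finset.sum_nonneg (fun k hk => hc0 k (Finset.mem_inter.1 hk).2)
    have hsecond : (0:ℝ) ≤ (π / T) * ∑ k ∈ f.support ∩ F, c k :=
      mul_nonneg (le_of_lt (div_pos hπ hT)) hmassnn
    refine ⟨f.support ∩ F, le_rfl, ?_, ?_⟩
    · rw [hsupp]
      by_cases hiF : i ∈ F
      · rw [Finset.singleton_inter_of_mem hiF]
        exact schreier_singleton (hFpos i hiF) _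
      · rw [Finset.singleton_inter_of_notMem hiF]
        exact schreier_empty _
    · have hmass : |ev f (bvec F c)| ≤ ∑ k ∈ f.support ∩ F, c k :=
        abs_ev_le_mass hc0 hbdd
      linarith
  intro f hf
  induction hf with
  | pos i =>
    exact fun t π T hπ hT _ _ => hsingle i _ (Finsupp.support_single_ne_zero i one_ne_zero)
      (waux_bdd _ (WAux1.pos i)) t π T hπ hT
  | neg i =>
    refine fun t π T hπ hT _ _ => hsingle i _ ?_
      (waux_bdd _ (WAux1.neg i)) t π T hπ hT
    rw [Finsupp.support_neg, Finsupp.support_single_ne_zero i one_ne_zero]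
  | op i' d g hg hadm ih =>
    intro t π T hπ hT h2t hmj
    classical
    set m : ℝ := (mpar 2 i' : ℝ) with hmdef
    have hm2 : (2:ℝ) ≤ m := by rw [hmdef]; exact_mod_cast mpar_ge_two i'
    have hm0 : (0:ℝ) < m := by linarith
    have hminv : m⁻¹ ≠ 0 := inv_ne_zero hm0.ne'
    have hord := hadm.2.1
    have hev : ev ((mpar 2 i' : ℝ)⁻¹ • ∑ l, g l) (bvec F c)
        = m⁻¹ * ∑ l, ev (g l) (bvec F c) := by
      rw [ev_smul, ev_sum]
    have habs : |ev ((mpar 2 i' : ℝ)⁻¹ • ∑ l, g l) (bvec F c)|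
        ≤ m⁻¹ * ∑ l, |ev (g l) (bvec F c)| := by
      rw [hev, abs_mul, abs_of_nonneg (inv_nonneg.2 hm0.le)]
      exact mul_le_mul_of_nonneg_left (Finset.abs_sum_le_sum_abs _ _)
        (inv_nonneg.2 hm0.le)
    have hmass : ∑ k ∈ (((mpar 2 i' : ℝ)⁻¹ • ∑ l, g l).support ∩ F), c k
        = ∑ l, ∑ k ∈ (g l).support ∩ F, c k := mass_split g hord hminv F c
    have hmassl_nn : ∀ l, (0:ℝ) ≤ ∑ k ∈ (g l).support ∩ F, c k :=
      fun l => Finset.sum_nonneg (fun k hk => hc0 k (Finset.mem_inter.1 hk).2)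
    by_cases hbig : T ≤ π * m
    · refine ⟨∅, Finset.empty_subset _, schreier_empty _, ?_⟩
      rw [Finset.sum_empty, zero_add, hmass]
      have hstep : ∀ l, |ev (g l) (bvec F c)| ≤ ∑ k ∈ (g l).support ∩ F, c k :=
        fun l => abs_ev_le_mass hc0 (waux_bdd _ (hg l))
      have h1 : m⁻¹ * ∑ l, |ev (g l) (bvec F c)|
          ≤ m⁻¹ * ∑ l, ∑ k ∈ (g l).support ∩ F, c k :=
        mul_le_mul_of_nonneg_left (Finset.sum_le_sum (fun l _ => hstep l))
          (inv_nonneg.2 hm0.le)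
      have h2 : m⁻¹ ≤ π / T := by
        rw [le_div_iff₀ hT]
        rw [inv_mul_le_iff₀ hm0]
        linarith
      have h3 : m⁻¹ * ∑ l, ∑ k ∈ (g l).support ∩ F, c k
          ≤ (π / T) * ∑ l, ∑ k ∈ (g l).support ∩ F, c k :=
        mul_le_mul_of_nonneg_right h2 (Finset.sum_nonneg (fun l _ => hmassl_nn l))
      linarith
    · push_neg at hbig
      have hmi'j : mpar 2 i' < mpar 2 j := by
        have h1 : π * m < π * (mpar 2 j : ℝ) := lt_of_lt_of_le hbig hmj
        have h2 : m < (mpar 2 j : ℝ) := (mul_lt_mul_iff_right₀ hπ).1 h1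
        rw [hmdef] at h2
        exact_mod_cast h2
      have hij : i' < j := lt_of_mpar_lt hmi'j
      obtain ⟨s, rfl⟩ : ∃ s, t = s + 1 := by
        cases t with
        | zero =>
          exfalso
          rw [pow_zero, mul_one] at h2t
          nlinarith
        | succ s => exact ⟨s, rfl⟩
      have hch : ∀ l, ∃ G : Finset ℕ, G ⊆ (g l).support ∩ F ∧
          G ∈ Schreier (s * (npar 2 (j-1) + 1)) ∧
          |ev (g l) (bvec F c)| ≤ (∑ k ∈ G, c k)
            + ((π * m) / T) * ∑ k ∈ (g l).support ∩ F, c k := by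
        intro l
        refine ih l s (π * m) T (by positivity) hT ?_ ?_
        · have hp : (0:ℝ) < 2 ^ s := by positivity
          rw [pow_succ] at h2t
          nlinarith
        · nlinarith [hmj, (Nat.cast_pos (α := ℝ)).2 (by omega : 0 < mpar 2 j), hπ]
      choose G hGsub hGmem hGbd using hch
      have hGdisj : ∀ l l' : Fin d, l ≠ l' → Disjoint (G l) (G l') := by
        intro l l' hne
        refine Finset.disjoint_of_subset_left
          (le_trans (hGsub l) Finset.inter_subset_left)
          (Finset.disjoint_of_subset_right
            (le_trans (hGsub l') Finset.inter_subset_left) (supp_disj hord l l' hne))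
      refine ⟨Finset.univ.biUnion G, ?_, ?_, ?_⟩
      · intro a ha
        rcases Finset.mem_biUnion.1 ha with ⟨l, _, hal⟩
        have h1 := hGsub l hal
        rw [Finset.mem_inter] at h1 ⊢
        refine ⟨?_, h1.2⟩
        rw [supp_comb g hord hminv]
        exact Finset.mem_biUnion.2 ⟨l, Finset.mem_univ _, h1.1⟩
      · have hminN : Finset.image (fun l => minsupp (g l)) Finset.univ
            ∈ Schreier (npar 2 (j-1) + 1) := by
          refine schreier_mono (by
            have := npar_mono (show i' ≤ j - 1 by omega)
            omega) ?_ hadm.2.2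
          intro k hk
          rcases Finset.mem_image.1 hk with ⟨l, _, hl⟩
          exact schreier_pos _ _ hadm.2.2 k hk
        have hglue := glue g G (npar 2 (j-1) + 1) (s * (npar 2 (j-1) + 1))
          hadm.1 hord hminN
          (fun l => le_trans (hGsub l) Finset.inter_subset_left) hGmem
        rw [show (s+1) * (npar 2 (j-1) + 1)
            = (npar 2 (j-1) + 1) + s * (npar 2 (j-1) + 1) by ring]
        exact hglue
      · have hGGnn : (0:ℝ) ≤ ∑ k ∈ Finset.univ.biUnion G, c k := by
          refine Finset.sum_nonneg (fun k hk => ?_)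
          rcases Finset.mem_biUnion.1 hk with ⟨l, _, hal⟩
          exact hc0 k (Finset.mem_inter.1 (hGsub l hal)).2
        have hGGsum : ∑ k ∈ Finset.univ.biUnion G, c k = ∑ l, ∑ k ∈ G l, c k :=
          sum_biUnion_parts G hGdisj c
        have h1 : ∑ l, |ev (g l) (bvec F c)|
            ≤ (∑ l, ∑ k ∈ G l, c k)
              + ((π * m) / T) * ∑ l, ∑ k ∈ (g l).support ∩ F, c k := by
          rw [Finset.mul_sum, ← Finset.sum_add_distrib]
          exact Finset.sum_le_sum (fun l _ => hGbd l)
        have h2 : m⁻¹ * (((π * m) / T) * ∑ l, ∑ k ∈ (g l).support ∩ F, c k)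
            = (π / T) * ∑ l, ∑ k ∈ (g l).support ∩ F, c k := by
          field_simp
        calc |ev ((mpar 2 i' : ℝ)⁻¹ • ∑ l, g l) (bvec F c)|
            ≤ m⁻¹ * ∑ l, |ev (g l) (bvec F c)| := habs
          _ ≤ m⁻¹ * ((∑ l, ∑ k ∈ G l, c k)
              + ((π * m) / T) * ∑ l, ∑ k ∈ (g l).support ∩ F, c k) :=
            mul_le_mul_of_nonneg_left h1 (inv_nonneg.2 hm0.le)
          _ = m⁻¹ * (∑ l, ∑ k ∈ G l, c k)
              + (π / T) * ∑ l, ∑ k ∈ (g l).support ∩ F, c k := by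
            rw [mul_add, h2]
          _ ≤ (∑ l, ∑ k ∈ G l, c k)
              + (π / T) * ∑ l, ∑ k ∈ (g l).support ∩ F, c k := by
            have hinv1 : m⁻¹ ≤ 1 := by
              rw [inv_le_one_iff₀]; right; linarith
            have : m⁻¹ * (∑ l, ∑ k ∈ G l, c k) ≤ ∑ l, ∑ k ∈ G l, c k := by
              rw [← hGGsum]
              nlinarith [mul_nonneg (by linarith : (0:ℝ) ≤ 1 - m⁻¹) hGGnn]
            linarith
          _ = (∑ k ∈ Finset.univ.biUnion G, c k)
              + (π / T) * ∑ k ∈ (((mpar 2 i' : ℝ)⁻¹ • ∑ l, g l).support ∩ F), c k := by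
            rw [hGGsum, hmass]
end Key
/-- let `j ≥ 2` (Lean index `j` with `1 ≤ j`), `0 < ε ≤ 1/m_j` and let
`x = ∑_{k ∈ F} c_k e_k` be an `(n_j, ε)`-basic special convex combination. Then every
`f ∈ W_aux^{(1)}` satisfies: (a) if `f = ±e_i^*`, `|f(x)| ≤ ε`; (b) if
`f = (1/m_i)·∑ f_l` for an `S_{n_i + 1}`-admissible sequence in `W_aux^{(1)}` with
`m_i ≥ m_j`, then `|f(x)| ≤ 1/m_i`; (c) if `m_i < m_j`, then `|f(x)| ≤ 2/(m_i·m_j)`. -/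
theorem stmt_16 (j : ℕ) (hj : 1 ≤ j) (ε : ℝ) (hε : 0 < ε)
    (hε' : ε ≤ 1 / (mpar 2 j : ℝ))
    (F : Finset ℕ) (c : ℕ → ℝ) (hscc : IsBSCC (npar 2 j) ε F c) :
    (∀ i : ℕ, |ev (Finsupp.single i 1) (bvec F c)| ≤ ε ∧
      |ev (-(Finsupp.single i 1)) (bvec F c)| ≤ ε) ∧
    (∀ (i d : ℕ) (g : Fin d → ℕ →₀ ℝ), (∀ l, WAux1 (g l)) →
      IsAdmissible (npar 2 i + 1) g →
      ((mpar 2 j ≤ mpar 2 i →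
        |ev ((mpar 2 i : ℝ)⁻¹ • ∑ l, g l) (bvec F c)| ≤ 1 / (mpar 2 i : ℝ)) ∧
       (mpar 2 i < mpar 2 j →
        |ev ((mpar 2 i : ℝ)⁻¹ • ∑ l, g l) (bvec F c)| ≤
          2 / ((mpar 2 i : ℝ) * (mpar 2 j : ℝ))))) := by
  classical
  obtain ⟨hc0, hsum, hF, hsmall⟩ := hscc
  have hFpos : ∀ k ∈ F, 1 ≤ k := by
    have h : F ∈ Schreier ((npar 2 j - 1) + 1) := by
      rwa [show (npar 2 j - 1) + 1 = npar 2 j by have := npar_ge_one j; omega]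
    exact fun k hk => schreier_pos _ _ h k hk
  have hmj2 : (2:ℝ) ≤ (mpar 2 j : ℝ) := by exact_mod_cast mpar_ge_two j
  have hmj0 : (0:ℝ) < (mpar 2 j : ℝ) := by linarith
  constructor
  · -- part (a)
    intro i
    have hpart : ∀ f : ℕ →₀ ℝ, f.support = {i} → (∀ k, |f k| ≤ 1) →
        |ev f (bvec F c)| ≤ ε := by
      intro f hsupp hb
      have h1 : |ev f (bvec F c)| ≤ ∑ k ∈ f.support ∩ F, c k := abs_ev_le_mass hc0 hb
      have h2 : ∑ k ∈ f.support ∩ F, c k ≤ ε := by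
        rw [hsupp]
        by_cases hiF : i ∈ F
        · rw [Finset.singleton_inter_of_mem hiF]
          exact le_of_lt (hsmall {i} (Finset.singleton_subset_iff.2 hiF)
            (schreier_singleton (hFpos i hiF) _))
        · rw [Finset.singleton_inter_of_notMem hiF]
          simpa using hε.le
      linarith
    refine ⟨hpart _ (Finsupp.support_single_ne_zero i one_ne_zero) (waux_bdd _ (WAux1.pos i)),
      hpart _ ?_ (waux_bdd _ (WAux1.neg i))⟩
    rw [Finsupp.support_neg, Finsupp.support_single_ne_zero i one_ne_zero]
  · -- parts (b), (c)
    intro i d g hg hadm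
    set m : ℝ := (mpar 2 i : ℝ) with hmdef
    have hm2 : (2:ℝ) ≤ m := by rw [hmdef]; exact_mod_cast mpar_ge_two i
    have hm0 : (0:ℝ) < m := by linarith
    have hminv : m⁻¹ ≠ 0 := inv_ne_zero hm0.ne'
    have hord := hadm.2.1
    have hev : ev ((mpar 2 i : ℝ)⁻¹ • ∑ l, g l) (bvec F c)
        = m⁻¹ * ∑ l, ev (g l) (bvec F c) := by rw [ev_smul, ev_sum]
    have habs : |ev ((mpar 2 i : ℝ)⁻¹ • ∑ l, g l) (bvec F c)|
        ≤ m⁻¹ * ∑ l, |ev (g l) (bvec F c)| := by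
      rw [hev, abs_mul, abs_of_nonneg (inv_nonneg.2 hm0.le)]
      exact mul_le_mul_of_nonneg_left (Finset.abs_sum_le_sum_abs _ _) (inv_nonneg.2 hm0.le)
    have hmass : ∑ k ∈ (((mpar 2 i : ℝ)⁻¹ • ∑ l, g l).support ∩ F), c k
        = ∑ l, ∑ k ∈ (g l).support ∩ F, c k := mass_split g hord hminv F c
    have hmassle : ∑ l, ∑ k ∈ (g l).support ∩ F, c k ≤ 1 := by
      rw [← hmass, ← hsum]
      exact Finset.sum_le_sum_of_subset_of_nonneg Finset.inter_subset_right
        (fun k hk _ => hc0 k hk)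
    constructor
    · -- part (b)
      intro _
      have hstep : ∀ l, |ev (g l) (bvec F c)| ≤ ∑ k ∈ (g l).support ∩ F, c k :=
        fun l => abs_ev_le_mass hc0 (waux_bdd _ (hg l))
      have h1 : m⁻¹ * ∑ l, |ev (g l) (bvec F c)| ≤ m⁻¹ * 1 := by
        refine mul_le_mul_of_nonneg_left ?_ (inv_nonneg.2 hm0.le)
        exact le_trans (Finset.sum_le_sum (fun l _ => hstep l)) hmassle
      rw [one_div]
      linarith
    · -- part (c)
      intro hlt
      have hij : i < j := lt_of_mpar_lt hlt
      have hch : ∀ l, ∃ G : Finset ℕ, G ⊆ (g l).support ∩ F ∧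
          G ∈ Schreier ((2 * mpar 2 j) * (npar 2 (j-1) + 1)) ∧
          |ev (g l) (bvec F c)| ≤ (∑ k ∈ G, c k)
            + (m / (m * (mpar 2 j : ℝ))) * ∑ k ∈ (g l).support ∩ F, c k := by
        intro l
        refine key_estimate j hj F c hc0 hFpos (g l) (hg l) (2 * mpar 2 j) m
          (m * (mpar 2 j : ℝ)) hm0 (by positivity) ?_ ?_
        · refine mul_le_mul_of_nonneg_left ?_ hm0.le
          have h1 : (mpar 2 j : ℝ) ≤ ((2 ^ (2 * mpar 2 j) : ℕ) : ℝ) := by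
            exact_mod_cast mpar_le_two_pow j
          calc (mpar 2 j : ℝ) ≤ ((2 ^ (2 * mpar 2 j) : ℕ) : ℝ) := h1
            _ = 2 ^ (2 * mpar 2 j) := by push_cast; ring
        · exact le_rfl
      choose G hGsub hGmem hGbd using hch
      have hGdisj : ∀ l l' : Fin d, l ≠ l' → Disjoint (G l) (G l') := by
        intro l l' hne
        exact Finset.disjoint_of_subset_left
          (le_trans (hGsub l) Finset.inter_subset_left)
          (Finset.disjoint_of_subset_right
            (le_trans (hGsub l') Finset.inter_subset_left) (supp_disj hord l l' hne))
      have hGGF : Finset.univ.biUnion G ⊆ F := by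
        intro a ha
        rcases Finset.mem_biUnion.1 ha with ⟨l, _, hal⟩
        exact (Finset.mem_inter.1 (hGsub l hal)).2
      have hGGmem : Finset.univ.biUnion G ∈ Schreier (npar 2 j - 1) := by
        have hminN : Finset.image (fun l => minsupp (g l)) Finset.univ
            ∈ Schreier (npar 2 (j-1) + 1) := by
          refine schreier_mono (by
            have := npar_mono (show i ≤ j - 1 by omega)
            omega) ?_ hadm.2.2
          intro k hk
          exact schreier_pos _ _ hadm.2.2 k hk
        have hglue := glue g G (npar 2 (j-1) + 1) ((2 * mpar 2 j) * (npar 2 (j-1) + 1))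
          hadm.1 hord hminN (fun l => le_trans (hGsub l) Finset.inter_subset_left) hGmem
        refine schreier_mono ?_ (fun k hk => hFpos k (hGGF hk)) hglue
        have h1 := key_numeric hj
        have h2 : (npar 2 (j-1) + 1) + (2 * mpar 2 j) * (npar 2 (j-1) + 1)
            = (2 * mpar 2 j + 1) * (npar 2 (j-1) + 1) := by ring
        omega
      have hGGe : ∑ k ∈ Finset.univ.biUnion G, c k < ε := hsmall _ hGGF hGGmem
      have hGGsum : ∑ k ∈ Finset.univ.biUnion G, c k = ∑ l, ∑ k ∈ G l, c k :=
        sum_biUnion_parts G hGdisj c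
      have hfrac : m / (m * (mpar 2 j : ℝ)) = 1 / (mpar 2 j : ℝ) := by
        field_simp
      have h1 : ∑ l, |ev (g l) (bvec F c)|
          ≤ (∑ l, ∑ k ∈ G l, c k)
            + (1 / (mpar 2 j : ℝ)) * ∑ l, ∑ k ∈ (g l).support ∩ F, c k := by
        rw [← hfrac, Finset.mul_sum, ← Finset.sum_add_distrib]
        exact Finset.sum_le_sum (fun l _ => hGbd l)
      have h2 : ∑ l, |ev (g l) (bvec F c)| ≤ 2 / (mpar 2 j : ℝ) := by
        have h3 : (1 / (mpar 2 j : ℝ)) * ∑ l, ∑ k ∈ (g l).support ∩ F, c k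
            ≤ 1 / (mpar 2 j : ℝ) := by
          rw [mul_le_iff_le_one_right] at *
          · nlinarith [hmassle, (by positivity : (0:ℝ) < 1 / (mpar 2 j : ℝ))]
          · positivity
        have h4 : ∑ l, ∑ k ∈ G l, c k < ε := by rw [← hGGsum]; exact hGGe
        have h5 : ε ≤ 1 / (mpar 2 j : ℝ) := hε'
        have : 2 / (mpar 2 j : ℝ) = 1 / (mpar 2 j : ℝ) + 1 / (mpar 2 j : ℝ) := by ring
        linarith
      calc |ev ((mpar 2 i : ℝ)⁻¹ • ∑ l, g l) (bvec F c)|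
          ≤ m⁻¹ * ∑ l, |ev (g l) (bvec F c)| := habs
        _ ≤ m⁻¹ * (2 / (mpar 2 j : ℝ)) := by
            refine mul_le_mul_of_nonneg_left h2 (inv_nonneg.2 hm0.le)
        _ = 2 / (m * (mpar 2 j : ℝ)) := by
            field_simp
end
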